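/- Let X be a closed connected n-dimensional manifold, P' ⊆ P open polydisks (products of open disks) in ℝ^{2n} with closure of P' contained in P, and ι : P → X a smooth embedding. Then ι(P') is solid: both ι(P') and X \ ι(P') are connected. -/

import Mathlib

open Topology Set Metric

private lemma annulus_preconnected' {r R : ℝ} (hr : 0 < r) :
    IsPreconnected {w : ℂ | r ≤ ‖w‖ ∧ ‖w‖ < R} := by
  have hconn : IsPreconnected ((Set.Ico r R) ×ˢ (Metric.sphere (0:ℂ) 1)) :=
    IsPreconnected.prod isPreconnected_Ico
      (isConnected_sphere (by rw [Complex.rank_real_complex]; norm_num) 0 zero_le_one).isPreconnected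
  have himg : (fun p : ℝ × ℂ => p.1 • p.2) '' ((Set.Ico r R) ×ˢ (Metric.sphere (0:ℂ) 1))
      = {w : ℂ | r ≤ ‖w‖ ∧ ‖w‖ < R} := by
    ext w
    constructor
    · rintro ⟨⟨t, c⟩, ⟨⟨htr, htR⟩, hc⟩, rfl⟩
      have hc1 : ‖c‖ = 1 := by simpa using hc
      have habs : ‖t • c‖ = t := by
        rw [norm_smul, hc1, mul_one, Real.norm_eq_abs,
          abs_of_nonneg (le_trans hr.le htr)]
      exact ⟨by rw [habs]; exact htr, by rw [habs]; exact htR⟩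
    · rintro ⟨h1, h2⟩
      have hw0 : ‖w‖ ≠ 0 := ne_of_gt (lt_of_lt_of_le hr h1)
      refine ⟨⟨‖w‖, (‖w‖)⁻¹ • w⟩, ⟨⟨h1, h2⟩, ?_⟩, ?_⟩
      · rw [mem_sphere_zero_iff_norm, norm_smul]
        simp [abs_of_nonneg (norm_nonneg w), hw0]
      · simp only [smul_smul]
        rw [mul_inv_cancel₀ hw0, one_smul]
  rw [← himg]
  exact hconn.image _ (continuous_fst.smul continuous_snd).continuousOn

/-- Let X be a closed connected 2n-dimensional manifold, P' ⊆ P open polydisks in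
ℂ^n ≅ ℝ^{2n} with cl(P') ⊆ P, and ι an embedding of P onto an open subset of X.
Then ι(P') is solid: both ι(P') and its complement are connected. -/
theorem stmt_9 {n : ℕ} (hn : 0 < n)
    {X : Type*} [TopologicalSpace X] [CompactSpace X] [T2Space X] [ConnectedSpace X]
    [ChartedSpace (EuclideanSpace ℝ (Fin (2 * n))) X]
    (a a' : Fin n → ℝ) (ha' : ∀ j, 0 < a' j) (haa' : ∀ j, a' j < a j)
    (ι : (Fin n → ℂ) → X)
    (hι : IsOpenEmbedding fun z : {z : Fin n → ℂ | ∀ j, ‖z j‖ ^ 2 < a j} =>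
      ι z) :
    IsConnected (ι '' {z : Fin n → ℂ | ∀ j, ‖z j‖ ^ 2 < a' j}) ∧
    IsConnected (ι '' {z : Fin n → ℂ | ∀ j, ‖z j‖ ^ 2 < a' j})ᶜ := by
  have ha : ∀ j, 0 < a j := fun j => (ha' j).trans (haa' j)
  set Pset : Set (Fin n → ℂ) := {z | ∀ j, ‖z j‖ ^ 2 < a j} with hPdef
  set P' : Set (Fin n → ℂ) := {z | ∀ j, ‖z j‖ ^ 2 < a' j} with hP'def
  set K : Set (Fin n → ℂ) := {z | ∀ j, ‖z j‖ ^ 2 ≤ a' j} with hKdef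
  have hP'P : P' ⊆ Pset := fun z hz j => (hz j).trans (haa' j)
  have hKP : K ⊆ Pset := fun z hz j => lt_of_le_of_lt (hz j) (haa' j)
  have hP'K : P' ⊆ K := fun z hz j => (hz j).le
  -- generic facts about images under ι of subsets of Pset
  have hcont : ∀ (s : Set (Fin n → ℂ)) (hs : s ⊆ Pset), Continuous fun z : s => ι ↑z :=
    fun s hs => hι.continuous.comp (continuous_inclusion hs)
  have himg_conn : ∀ s, s ⊆ Pset → IsConnected s → IsConnected (ι '' s) := by
    intro s hs hcs
    rw [Set.image_eq_range]
    haveI : ConnectedSpace s := Subtype.connectedSpace hcs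
    exact isConnected_range (hcont s hs)
  have himg_cpt : ∀ s, s ⊆ Pset → IsCompact s → IsCompact (ι '' s) := by
    intro s hs hcs
    rw [Set.image_eq_range]
    haveI : CompactSpace s := isCompact_iff_compactSpace.mp hcs
    exact isCompact_range (hcont s hs)
  have hinj : ∀ z ∈ Pset, ∀ w ∈ Pset, ι z = ι w → z = w := by
    intro z hz w hw h
    exact congrArg Subtype.val (hι.injective (a₁ := ⟨z, hz⟩) (a₂ := ⟨w, hw⟩) h)
  -- P' is open and convex
  have hP'eq : P' = Set.pi Set.univ (fun j => Metric.ball (0:ℂ) (Real.sqrt (a' j))) := by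
    ext z
    simp only [hP'def, Set.mem_setOf_eq, Set.mem_pi, Set.mem_univ, forall_true_left,
      Metric.mem_ball, dist_zero_right]
    exact forall_congr' fun j => (Real.lt_sqrt (norm_nonneg _)).symm
  have hP'open : IsOpen P' := by
    rw [hP'eq]; exact isOpen_set_pi Set.finite_univ fun j _ => Metric.isOpen_ball
  have hP'conv : Convex ℝ P' := by
    rw [hP'eq]; exact convex_pi fun j _ => convex_ball _ _
  have h0 : (0 : Fin n → ℂ) ∈ P' := by
    intro j; simp only [Pi.zero_apply, map_zero]; simpa using ha' j
  -- K is compact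
  have hKeq : K = Set.pi Set.univ (fun j => Metric.closedBall (0:ℂ) (Real.sqrt (a' j))) := by
    ext z
    simp only [hKdef, Set.mem_setOf_eq, Set.mem_pi, Set.mem_univ, forall_true_left,
      Metric.mem_closedBall, dist_zero_right]
    exact forall_congr' fun j => (Real.le_sqrt (norm_nonneg _) (ha' j).le).symm
  have hKcpt : IsCompact K := by
    rw [hKeq]; exact isCompact_univ_pi fun j => isCompact_closedBall _ _
  -- the "outer annulus" Pset \ P' is preconnected
  set zs : Fin n → ℂ := fun k => (Real.sqrt (a' k) : ℂ) with hzs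
  have hzs_abs : ∀ k, ‖zs k‖ = Real.sqrt (a' k) := by
    intro k
    rw [hzs]
    simp [Complex.norm_real, abs_of_nonneg (Real.sqrt_nonneg _)]
  have hzs_sq : ∀ k, ‖zs k‖ ^ 2 = a' k := by
    intro k; rw [hzs_abs k, Real.sq_sqrt (ha' k).le]
  have hzsP : zs ∈ Pset := fun k => by rw [hzs_sq k]; exact haa' k
  have hzsnP' : zs ∉ P' := by
    intro h
    exact absurd (h ⟨0, hn⟩) (by rw [hzs_sq]; exact lt_irrefl _)
  set sj : Fin n → Fin n → Set ℂ := fun j k =>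
    if k = j then {w : ℂ | Real.sqrt (a' j) ≤ ‖w‖ ∧ ‖w‖ < Real.sqrt (a j)}
    else Metric.ball (0:ℂ) (Real.sqrt (a k)) with hsj
  have hball_mem : ∀ (k : Fin n) (w : ℂ), w ∈ Metric.ball (0:ℂ) (Real.sqrt (a k)) ↔
      ‖w‖ ^ 2 < a k := by
    intro k w
    rw [Metric.mem_ball, dist_zero_right,
      Real.lt_sqrt (norm_nonneg _)]
  have hAj_pre : ∀ j, IsPreconnected (Set.pi Set.univ (sj j)) := by
    intro j
    apply isPreconnected_univ_pi
    intro k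
    by_cases hk : k = j
    · rw [hsj]; simp only [hk, if_pos rfl]
      exact annulus_preconnected' (Real.sqrt_pos.mpr (ha' j))
    · rw [hsj]; simp only [if_neg hk]
      exact (convex_ball _ _).isPreconnected
  have hunion : Pset \ P' = ⋃ j, Set.pi Set.univ (sj j) := by
    ext z
    simp only [Set.mem_diff, hPdef, hP'def, Set.mem_setOf_eq, Set.mem_iUnion, Set.mem_pi,
      Set.mem_univ, forall_true_left]
    constructor
    · rintro ⟨hzP, hzP'⟩
      push_neg at hzP'
      obtain ⟨j, hj⟩ := hzP'
      refine ⟨j, fun k => ?_⟩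
      rw [hsj]
      by_cases hk : k = j
      · simp only [hk, if_pos rfl]
        subst hk
        constructor
        · calc Real.sqrt (a' k) ≤ Real.sqrt (‖z k‖ ^ 2) := Real.sqrt_le_sqrt hj
            _ = ‖z k‖ := Real.sqrt_sq (norm_nonneg _)
        · exact (Real.lt_sqrt (norm_nonneg _)).mpr (hzP k)
      · simp only [if_neg hk]
        exact (hball_mem k _).mpr (hzP k)
    · rintro ⟨j, hj⟩
      have hzP : ∀ k, ‖z k‖ ^ 2 < a k := by
        intro k
        have := hj k
        rw [hsj] at this
        by_cases hk : k = j
        · simp only [hk, if_pos rfl] at this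
          subst hk
          exact (Real.lt_sqrt (norm_nonneg _)).mp this.2
        · simp only [if_neg hk] at this
          exact (hball_mem k _).mp this
      refine ⟨hzP, ?_⟩
      intro hz'
      have := hj j
      rw [hsj] at this
      simp only [if_pos rfl] at this
      have h1 : a' j ≤ ‖z j‖ ^ 2 := by
        have := this.1
        nlinarith [Real.sq_sqrt (ha' j).le, Real.sqrt_nonneg (a' j), norm_nonneg (z j)]
      exact absurd (hz' j) (not_lt.mpr h1)
  have hzs_mem : ∀ j, zs ∈ Set.pi Set.univ (sj j) := by
    intro j k _
    rw [hsj]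
    by_cases hk : k = j
    · subst hk
      simp only [if_pos rfl, Set.mem_setOf_eq]
      exact ⟨(hzs_abs k).ge, lt_of_le_of_lt (hzs_abs k).le
        (Real.sqrt_lt_sqrt (ha' k).le (haa' k))⟩
    · simp only [if_neg hk]
      rw [Metric.mem_ball, dist_zero_right]
      exact lt_of_le_of_lt (hzs_abs k).le (Real.sqrt_lt_sqrt (ha' k).le (haa' k))
  have hA_pre : IsPreconnected (Pset \ P') := by
    rw [hunion]
    exact isPreconnected_iUnion ⟨zs, Set.mem_iInter.mpr hzs_mem⟩ hAj_pre
  have hA_ne : (Pset \ P').Nonempty := ⟨zs, hzsP, hzsnP'⟩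
  set U : Set X := ι '' P' with hUdef
  set A : Set X := ι '' (Pset \ P') with hAdef
  have hA_conn : IsConnected A := himg_conn _ Set.diff_subset ⟨hA_ne, hA_pre⟩
  have hAU : A ⊆ Uᶜ := by
    rintro x ⟨z, ⟨hzP, hznP'⟩, rfl⟩ ⟨w, hwP', hw⟩
    exact hznP' (hinj w (hP'P hwP') z hzP hw ▸ hwP')
  -- U is open
  have hUopen : IsOpen U := by
    have heq : U = (fun z : {z : Fin n → ℂ | ∀ j, ‖z j‖ ^ 2 < a j} => ι ↑z) ''
        (Subtype.val ⁻¹' P') := by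
      ext x
      constructor
      · rintro ⟨z, hz, rfl⟩
        exact ⟨⟨z, hP'P hz⟩, hz, rfl⟩
      · rintro ⟨⟨z, hz⟩, hz', rfl⟩
        exact ⟨z, hz', rfl⟩
    rw [heq]
    exact hι.isOpenMap _ (hP'open.preimage continuous_subtype_val)
  -- closure of U
  have hclU : closure U ⊆ ι '' K :=
    closure_minimal (Set.image_mono hP'K) (himg_cpt K hKP hKcpt).isClosed
  have hKsub : ι '' K ⊆ U ∪ A := by
    rw [hUdef, hAdef, ← Set.image_union]
    exact Set.image_mono fun z hz => by
      by_cases h : z ∈ P'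
      · exact Or.inl h
      · exact Or.inr ⟨hKP hz, h⟩
  -- key step
  have key : ∀ u v : Set X, IsClosed u → IsClosed v → Uᶜ ⊆ u ∪ v → Disjoint u v →
      A ⊆ u → Uᶜ ⊆ u := by
    intro u v hu hv hcov hdisj hAu
    set W : Set X := U ∪ (Uᶜ ∩ u) with hW
    set V : Set X := Uᶜ ∩ v with hV
    have hWc : IsClosed W := by
      apply isClosed_of_closure_subset
      rw [hW, closure_union]
      apply Set.union_subset
      · intro x hx
        rcases hKsub (hclU hx) with h | h
        · exact Or.inl h
        · exact Or.inr ⟨hAU h, hAu h⟩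
      · rw [IsClosed.closure_eq (hUopen.isClosed_compl.inter hu)]
        exact Set.subset_union_right
    have hVc : IsClosed V := hUopen.isClosed_compl.inter hv
    have hdisjWV : Disjoint W V := by
      rw [hW, hV, Set.disjoint_union_left]
      constructor
      · exact Set.disjoint_left.mpr fun x hx ⟨hx', _⟩ => hx' hx
      · exact Set.disjoint_left.mpr fun x ⟨_, hxu⟩ ⟨_, hxv⟩ =>
          Set.disjoint_left.mp hdisj hxu hxv
    have hcover : Set.univ ⊆ W ∪ V := by
      intro x _
      by_cases hx : x ∈ U
      · exact Or.inl (Or.inl hx)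
      · rcases hcov hx with h | h
        · exact Or.inl (Or.inr ⟨hx, h⟩)
        · exact Or.inr ⟨hx, h⟩
    rcases (isPreconnected_iff_subset_of_fully_disjoint_closed isClosed_univ).mp
        isPreconnected_univ W V hWc hVc hcover hdisjWV with h | h
    · intro x hx
      rcases h (Set.mem_univ x) with h' | h'
      · exact absurd h' hx
      · exact h'.2
    · exfalso
      have : ι 0 ∈ U := ⟨0, h0, rfl⟩
      exact (h (Set.mem_univ (ι 0))).1 this
  constructor
  · exact himg_conn P' hP'P ⟨⟨0, h0⟩, hP'conv.isPreconnected⟩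
  · refine ⟨⟨ι zs, hAU ⟨zs, ⟨hzsP, hzsnP'⟩, rfl⟩⟩, ?_⟩
    rw [isPreconnected_iff_subset_of_fully_disjoint_closed hUopen.isClosed_compl]
    intro u v hu hv hcov hdisj
    rcases (isPreconnected_iff_subset_of_disjoint_closed.mp hA_conn.isPreconnected u v hu hv
        (hAU.trans hcov) (by rw [hdisj.inter_eq, Set.inter_empty])) with h | h
    · exact Or.inl (key u v hu hv hcov hdisj h)
    · exact Or.inr (key v u hv hu (by rwa [Set.union_comm]) hdisj.symm h)
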